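/- Every rooted join tree admits a rearrangement (a join tree with the same set of nodes, possibly different edges) with the same root that is maximally branching. -/
import Mathlib


/-- The underlying tree graph of a parent function. -/
def treeGraph {ι : Type*} (parent : ι → ι) : SimpleGraph ι :=
  SimpleGraph.fromRel (fun i j => parent i = j)

/-- Join-tree property: for every vertex `u`, the nodes containing `u` form a
connected subtree. -/
def joinTreeProp {V ι : Type*} (N : ι → Set V) (parent : ι → ι) : Prop :=
  ∀ u : V, ((treeGraph parent).induce {i | u ∈ N i}).Preconnected

/-- `a` is a strict ancestor of `p`. -/
def strictAncestor {ι : Type*} (parent : ι → ι) (p a : ι) : Prop :=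
  ∃ n, 1 ≤ n ∧ parent^[n] p = a

/-- Maximally branching rooted join tree. -/
def maxBranching {V ι : Type*} [DecidableEq ι] (N : ι → Set V) (r : ι)
    (parent : ι → ι) : Prop :=
  ∀ c a, c ≠ r → strictAncestor parent (parent c) a → a ≠ parent c →
    ¬ joinTreeProp N (Function.update parent c a)

section aux

attribute [local instance] Classical.propDecidable

variable {ι : Type*} {parent : ι → ι} {r : ι}

/-- Depth of a node: minimal number of parent steps to reach the root. -/
noncomputable def depthFn (parent : ι → ι) (r : ι)
    (hreach : ∀ i, ∃ n, parent^[n] i = r) (i : ι) : ℕ :=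
  Nat.find (hreach i)

lemma depthFn_spec (hreach : ∀ i, ∃ n, parent^[n] i = r) (i : ι) :
    parent^[depthFn parent r hreach i] i = r := Nat.find_spec (hreach i)

lemma depthFn_le (hreach : ∀ i, ∃ n, parent^[n] i = r) {i : ι} {n : ℕ}
    (h : parent^[n] i = r) : depthFn parent r hreach i ≤ n := Nat.find_min' (hreach i) h

lemma depthFn_eq_zero (hreach : ∀ i, ∃ n, parent^[n] i = r) {i : ι}
    (h : depthFn parent r hreach i = 0) : i = r := by
  have := depthFn_spec hreach i
  rw [h] at this
  simpa using this

lemma depthFn_root (hroot : parent r = r) (hreach : ∀ i, ∃ n, parent^[n] i = r) :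
    depthFn parent r hreach r = 0 :=
  Nat.le_zero.mp (depthFn_le hreach (by simp))

lemma depthFn_succ (hreach : ∀ i, ∃ n, parent^[n] i = r) {i : ι} (h : i ≠ r) :
    depthFn parent r hreach i = depthFn parent r hreach (parent i) + 1 := by
  have h1 : 1 ≤ depthFn parent r hreach i := by
    rcases Nat.eq_zero_or_pos (depthFn parent r hreach i) with h0 | h0
    · exact absurd (depthFn_eq_zero hreach h0) h
    · exact h0
  have hle : depthFn parent r hreach i ≤ depthFn parent r hreach (parent i) + 1 := by
    apply depthFn_le
    rw [Function.iterate_succ_apply]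
    exact depthFn_spec hreach (parent i)
  have hge : depthFn parent r hreach (parent i) ≤ depthFn parent r hreach i - 1 := by
    apply depthFn_le
    have hspec := depthFn_spec hreach i
    rw [show depthFn parent r hreach i = (depthFn parent r hreach i - 1) + 1 from
      (Nat.sub_add_cancel h1).symm, Function.iterate_succ_apply] at hspec
    exact hspec
  omega

lemma depthFn_iterate (hroot : parent r = r) (hreach : ∀ i, ∃ n, parent^[n] i = r)
    (n : ℕ) (i : ι) :
    depthFn parent r hreach (parent^[n] i) = depthFn parent r hreach i - n := by
  induction n with
  | zero => simp
  | succ n ih =>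
    rw [Function.iterate_succ_apply']
    by_cases hx : parent^[n] i = r
    · rw [hx, hroot, depthFn_root hroot hreach]
      rw [hx, depthFn_root hroot hreach] at ih
      omega
    · have := depthFn_succ hreach hx
      omega

end aux

/-- Every rooted join tree admits a rearrangement (same nodes,
same root) that is a maximally-branching join tree. -/
theorem exists_maxBranching_rearrangement {V ι : Type*} [Fintype ι] [DecidableEq ι]
    (N : ι → Set V) (r : ι) (parent : ι → ι)
    (hroot : parent r = r) (hreach : ∀ i, ∃ n, parent^[n] i = r)
    (hjt : joinTreeProp N parent) :
    ∃ parent' : ι → ι, parent' r = r ∧ (∀ i, ∃ n, parent'^[n] i = r) ∧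
      joinTreeProp N parent' ∧ maxBranching N r parent' := by
  suffices H : ∀ (m : ℕ) (p : ι → ι) (hroot : p r = r) (hreach : ∀ i, ∃ n, p^[n] i = r),
      joinTreeProp N p → (∑ i : ι, depthFn p r hreach i) ≤ m →
      ∃ parent' : ι → ι, parent' r = r ∧ (∀ i, ∃ n, parent'^[n] i = r) ∧
        joinTreeProp N parent' ∧ maxBranching N r parent' by
    exact H _ parent hroot hreach hjt le_rfl
  intro m
  induction m with
  | zero =>
    intro p hroot hreach hjt hsum
    refine ⟨p, hroot, hreach, hjt, ?_⟩
    intro c a hc _ _ _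
    apply hc
    apply depthFn_eq_zero hreach (i := c)
    have : depthFn p r hreach c ≤ ∑ i : ι, depthFn p r hreach i :=
      Finset.single_le_sum (fun i _ => Nat.zero_le _) (Finset.mem_univ c)
    omega
  | succ m ih =>
    intro p hroot hreach hjt hsum
    by_cases hmb : maxBranching N r p
    · exact ⟨p, hroot, hreach, hjt, hmb⟩
    · -- extract a witness of non-maximality
      rw [maxBranching] at hmb
      push_neg at hmb
      obtain ⟨c, a, hc, hanc, hane, hjt'⟩ := hmb
      obtain ⟨k, hk1, hka⟩ := hanc
      -- depth facts
      have hdc : depthFn p r hreach c = depthFn p r hreach (p c) + 1 := depthFn_succ hreach hc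
      have hda : depthFn p r hreach a = depthFn p r hreach (p c) - k := by
        rw [← hka]; exact depthFn_iterate hroot hreach k (p c)
      have hpc1 : 1 ≤ depthFn p r hreach (p c) := by
        by_contra h
        have h0 : depthFn p r hreach (p c) = 0 := by omega
        have hpcr : p c = r := depthFn_eq_zero hreach h0
        have : a = r := depthFn_eq_zero hreach (by omega)
        exact hane (this.trans hpcr.symm)
      have hkey : depthFn p r hreach a + 1 < depthFn p r hreach c := by omega
      -- basic facts about the updated parent function
      have hp'c : Function.update p c a c = a := Function.update_self c a p
      have hp'ne : ∀ i, i ≠ c → Function.update p c a i = p i :=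
        fun i hi => Function.update_of_ne hi a p
      have hroot' : Function.update p c a r = r := by rw [hp'ne r (Ne.symm hc)]; exact hroot
      -- reachability with depth bound
      have claim : ∀ (t : ℕ) (i : ι), depthFn p r hreach i ≤ t →
          ∃ n, n ≤ depthFn p r hreach i ∧ (Function.update p c a)^[n] i = r := by
        intro t
        induction t with
        | zero =>
          intro i hi
          exact ⟨0, Nat.zero_le _, depthFn_eq_zero hreach (Nat.le_zero.mp hi)⟩
        | succ t iht =>
          intro i hi
          by_cases hir : i = r
          · exact ⟨0, Nat.zero_le _, hir⟩
          by_cases hic : i = c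
          · subst hic
            obtain ⟨n, hn, hnr⟩ := iht a (by omega)
            refine ⟨n + 1, by omega, ?_⟩
            rw [Function.iterate_succ_apply, hp'c]
            exact hnr
          · have hstep : depthFn p r hreach (p i) + 1 = depthFn p r hreach i :=
              (depthFn_succ hreach hir).symm
            obtain ⟨n, hn, hnr⟩ := iht (p i) (by omega)
            refine ⟨n + 1, by omega, ?_⟩
            rw [Function.iterate_succ_apply, hp'ne i hic]
            exact hnr
      have hreach' : ∀ i, ∃ n, (Function.update p c a)^[n] i = r := by
        intro i
        obtain ⟨n, _, hn⟩ := claim (depthFn p r hreach i) i le_rfl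
        exact ⟨n, hn⟩
      have hle : ∀ i, depthFn (Function.update p c a) r hreach' i ≤ depthFn p r hreach i := by
        intro i
        obtain ⟨n, hn, hnr⟩ := claim (depthFn p r hreach i) i le_rfl
        exact le_trans (depthFn_le hreach' hnr) hn
      have hltc : depthFn (Function.update p c a) r hreach' c < depthFn p r hreach c := by
        have hspec : (Function.update p c a)^[depthFn (Function.update p c a) r hreach' a + 1] c
            = r := by
          rw [Function.iterate_succ_apply, hp'c]
          exact depthFn_spec hreach' a
        have h2 := depthFn_le hreach' hspec
        have h3 := hle a
        omega
      have hsum' : (∑ i : ι, depthFn (Function.update p c a) r hreach' i)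
          < ∑ i : ι, depthFn p r hreach i :=
        Finset.sum_lt_sum (fun i _ => hle i) ⟨c, Finset.mem_univ c, hltc⟩
      exact ih (Function.update p c a) hroot' hreach' hjt' (by omega)
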